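/- Let L > 0, μ ≤ 0, κ = μ/L, and h ∈ [1, h̄(κ)] where h̄(κ) = 3/(1+κ+√(1-κ+κ²)). Let x₁ = x₀ - (h/L)g₀ with g₀ = ∇f(x₀), g₁ = ∇f(x₁). Assuming the two hypoconvex interpolation inequalities between (x₀,g₀,f₀) and (x₁,g₁,f₁) hold, then (h[κh² - 2h(1+κ) + 3]/(2L[2 - h(1+κ)]))·‖g₀‖² + (h/(2L[2 - h(1+κ)]))·‖g₁‖² ≤ f₀ - f₁, and consequently min(‖g₀‖², ‖g₁‖²) ≤ 2L(f₀ - f₁)·(2 - h(1+κ))/(h(2-h)(2-κh)). -/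

import Mathlib

open RealInnerProductSpace

noncomputable def hbar (κ : ℝ) : ℝ := 3 / (1 + κ + Real.sqrt (1 - κ + κ ^ 2))

set_option maxHeartbeats 1000000 in
theorem stmt_10 {d : ℕ} (f : EuclideanSpace ℝ (Fin d) → ℝ) (L μ κ : ℝ)
    (hL : 0 < L) (hμ : μ ≤ 0) (hκ : κ = μ / L)
    (h : ℝ) (hh : h ∈ Set.Icc 1 (hbar κ))
    (x₀ x₁ : EuclideanSpace ℝ (Fin d))
    (hstep : x₁ = x₀ - (h / L) • gradient f x₀)
    (hinterp01 : f x₀ - f x₁ - ⟪gradient f x₁, x₀ - x₁⟫ ≥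
      (1 / (2 * (1 - κ))) * ((1 / L) * ‖gradient f x₀ - gradient f x₁‖ ^ 2 +
        μ * ‖x₀ - x₁‖ ^ 2 -
        2 * κ * ⟪gradient f x₁ - gradient f x₀, x₁ - x₀⟫))
    (hinterp10 : f x₁ - f x₀ - ⟪gradient f x₀, x₁ - x₀⟫ ≥
      (1 / (2 * (1 - κ))) * ((1 / L) * ‖gradient f x₁ - gradient f x₀‖ ^ 2 +
        μ * ‖x₁ - x₀‖ ^ 2 -
        2 * κ * ⟪gradient f x₀ - gradient f x₁, x₀ - x₁⟫)) :
    (h * (κ * h ^ 2 - 2 * h * (1 + κ) + 3) / (2 * L * (2 - h * (1 + κ)))) *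
        ‖gradient f x₀‖ ^ 2 +
      (h / (2 * L * (2 - h * (1 + κ)))) * ‖gradient f x₁‖ ^ 2 ≤ f x₀ - f x₁ ∧
    min (‖gradient f x₀‖ ^ 2) (‖gradient f x₁‖ ^ 2) ≤
      2 * L * (f x₀ - f x₁) * (2 - h * (1 + κ)) / (h * (2 - h) * (2 - κ * h)) := by
  set g₀ := gradient f x₀ with hg₀
  set g₁ := gradient f x₁ with hg₁
  set A := ‖g₀‖ ^ 2 with hA
  set B := ‖g₁‖ ^ 2 with hB
  set C := (⟪g₀, g₁⟫ : ℝ) with hC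
  set F := f x₀ - f x₁ with hF
  have h1 : 1 ≤ h := hh.1
  have hκ0 : κ ≤ 0 := by
    rw [hκ]; exact div_nonpos_of_nonpos_of_nonneg hμ hL.le
  have hμL : μ = κ * L := by rw [hκ, div_mul_cancel₀ μ hL.ne']
  set s := Real.sqrt (1 - κ + κ ^ 2) with hs
  have hsnn : 0 ≤ s := Real.sqrt_nonneg _
  have hssq : s ^ 2 = 1 - κ + κ ^ 2 := Real.sq_sqrt (by nlinarith)
  have hsκ : 0 < κ + s := by nlinarith [sq_nonneg (s + κ)]
  have hden : 0 < 1 + κ + s := by linarith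
  have hhub : h * (1 + κ + s) ≤ 3 := by
    have := hh.2
    rw [hbar, le_div_iff₀ hden] at this
    linarith
  have hhs : 0 ≤ h * s := mul_nonneg (by linarith) hsnn
  have h3h : h * s ≤ 3 - h * (1 + κ) := by
    have hexp : h * (1 + κ + s) = h * (1 + κ) + h * s := by ring
    linarith
  have hq : 0 ≤ κ * h ^ 2 - 2 * h * (1 + κ) + 3 := by
    have hsq := mul_le_mul h3h h3h hhs (by linarith)
    nlinarith
  have h2 : h < 2 := by
    by_contra hc
    push_neg at hc
    nlinarith [mul_nonneg (mul_nonneg (neg_nonneg.mpr hκ0) (by linarith : (0:ℝ) ≤ h)) (by linarith : (0:ℝ) ≤ h - 2)]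
  have hκh : κ * h ≤ 0 := mul_nonpos_of_nonpos_of_nonneg hκ0 (by linarith)
  have hD : 0 < 2 - h * (1 + κ) := by
    have hexp2 : h * (1 + κ) = h + κ * h := by ring
    linarith
  have h1κh : 0 < 1 - κ * h := by linarith
  have h1κ : 0 < 1 - κ := by linarith
  have hx : x₀ - x₁ = (h / L) • g₀ := by rw [hstep]; exact (sub_sub_cancel _ _)
  have hx' : x₁ - x₀ = (-(h / L)) • g₀ := by
    rw [neg_smul, ← hx, neg_sub]
  have hn01 : ‖x₀ - x₁‖ ^ 2 = (h / L) ^ 2 * A := by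
    rw [hx, norm_smul, mul_pow, Real.norm_eq_abs, sq_abs, hA]
  have hn10 : ‖x₁ - x₀‖ ^ 2 = (h / L) ^ 2 * A := by
    rw [norm_sub_rev, hn01]
  have hgn : ‖g₀ - g₁‖ ^ 2 = A + B - 2 * C := by
    rw [norm_sub_sq_real, hA, hB, hC]; ring
  have hgn' : ‖g₁ - g₀‖ ^ 2 = A + B - 2 * C := by rw [norm_sub_rev, hgn]
  have hi1 : (⟪g₁, x₀ - x₁⟫ : ℝ) = (h / L) * C := by
    rw [hx]
    simp only [real_inner_smul_right, real_inner_comm g₁ g₀, hC]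
  have hi2 : (⟪g₁ - g₀, x₁ - x₀⟫ : ℝ) = -(h / L) * (C - A) := by
    rw [hx']
    simp only [real_inner_smul_right, inner_sub_left, real_inner_comm g₁ g₀,
      real_inner_self_eq_norm_sq, hC, hA]
    try ring
  have hi3 : (⟪g₀, x₁ - x₀⟫ : ℝ) = -(h / L) * A := by
    rw [hx']
    simp only [real_inner_smul_right, real_inner_self_eq_norm_sq, hA]
    try ring
  have hi4 : (⟪g₀ - g₁, x₀ - x₁⟫ : ℝ) = (h / L) * (A - C) := by
    rw [hx]
    simp only [real_inner_smul_right, inner_sub_left, real_inner_self_eq_norm_sq,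
      real_inner_comm g₁ g₀, hC, hA]
    try ring
  rw [hi1, hn01, hgn, hi2] at hinterp01
  rw [hi3, hn10, hgn', hi4] at hinterp10
  have hL' : L ≠ 0 := hL.ne'
  have t1 : 0 ≤ 2 * (1 - κ) * L * (1 - κ * h) *
      ((F - (h / L) * C) - (1 / (2 * (1 - κ))) * ((1 / L) * (A + B - 2 * C) +
        μ * ((h / L) ^ 2 * A) - 2 * κ * (-(h / L) * (C - A)))) := by
    apply mul_nonneg
    · positivity
    · linarith [hinterp01]
  have t2 : 0 ≤ 2 * (1 - κ) * L * (h - 1) *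
      (((h / L) * A - F) - (1 / (2 * (1 - κ))) * ((1 / L) * (A + B - 2 * C) +
        μ * ((h / L) ^ 2 * A) - 2 * κ * ((h / L) * (A - C)))) := by
    apply mul_nonneg
    · have h1' : 0 ≤ h - 1 := by linarith
      positivity
    · linarith [hinterp10]
  have key : 0 ≤ 2 * L * (2 - h * (1 + κ)) * F -
      h * (κ * h ^ 2 - 2 * h * (1 + κ) + 3) * A - h * B := by
    have hid : (1 - κ) * (2 * L * (2 - h * (1 + κ)) * F -
        h * (κ * h ^ 2 - 2 * h * (1 + κ) + 3) * A - h * B) =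
        2 * (1 - κ) * L * (1 - κ * h) *
          ((F - (h / L) * C) - (1 / (2 * (1 - κ))) * ((1 / L) * (A + B - 2 * C) +
            μ * ((h / L) ^ 2 * A) - 2 * κ * (-(h / L) * (C - A)))) +
        2 * (1 - κ) * L * (h - 1) *
          (((h / L) * A - F) - (1 / (2 * (1 - κ))) * ((1 / L) * (A + B - 2 * C) +
            μ * ((h / L) ^ 2 * A) - 2 * κ * ((h / L) * (A - C)))) := by
      rw [hμL]
      field_simp
      ring
    have hGnn : 0 ≤ (1 - κ) * (2 * L * (2 - h * (1 + κ)) * F -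
        h * (κ * h ^ 2 - 2 * h * (1 + κ) + 3) * A - h * B) := by
      rw [hid]; exact add_nonneg t1 t2
    exact nonneg_of_mul_nonneg_right hGnn h1κ
  constructor
  · rw [div_mul_eq_mul_div, div_mul_eq_mul_div, ← add_div,
      div_le_iff₀ (by positivity : (0:ℝ) < 2 * L * (2 - h * (1 + κ)))]
    linarith
  · rw [le_div_iff₀ (mul_pos (mul_pos (by linarith : (0:ℝ) < h)
      (by linarith : (0:ℝ) < 2 - h)) (by linarith : (0:ℝ) < 2 - κ * h))]
    have hmA : min A B ≤ A := min_le_left _ _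
    have hmB : min A B ≤ B := min_le_right _ _
    have e1 : h * (κ * h ^ 2 - 2 * h * (1 + κ) + 3) * min A B ≤
        h * (κ * h ^ 2 - 2 * h * (1 + κ) + 3) * A :=
      mul_le_mul_of_nonneg_left hmA (mul_nonneg (by linarith) hq)
    have e2 : h * min A B ≤ h * B := mul_le_mul_of_nonneg_left hmB (by linarith)
    have hexp3 : min A B * (h * (2 - h) * (2 - κ * h)) =
        h * (κ * h ^ 2 - 2 * h * (1 + κ) + 3) * min A B + h * min A B := by ring
    linarith
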